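/- arXiv:2109.11780 — 3 statements merged into one kernel-verified Lean document; each statement's English description precedes it below -/
import Mathlib

section
/- For all 0 ≤ s ≤ t ≤ 1, ξ ∈ ℝ, r > 0 and ε ∈ [0,1], the variation γ_{s,t}(ξ,r) := γ_t(ξ,r) − γ_s(ξ,r) satisfies |γ_{s,t}(ξ,r)| ≤ C (|ξ|^ε |t−s|^ε + |t−s|) for a universal constant C. -/
open MeasureTheory

noncomputable def gammaH (t ξ r : ℝ) : ℂ :=
  Complex.exp (Complex.I * ξ * t) *
    ∫ s in (0:ℝ)..t, Complex.exp (-(s:ℂ) * (r:ℂ)^2) * Complex.exp (-Complex.I * ξ * s)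

lemma min_le_rpow_aux (x ε : ℝ) (hx : 0 ≤ x) (h0 : 0 ≤ ε) (h1 : ε ≤ 1) :
    min 1 x ≤ x ^ ε := by
  rcases le_or_gt 1 x with h | h
  · calc min 1 x ≤ 1 := min_le_left _ _
    _ ≤ x ^ ε := Real.one_le_rpow h h0
  · rcases eq_or_lt_of_le hx with h0x | h0x
    · rw [← h0x]
      simpa using Real.rpow_nonneg le_rfl ε
    · calc min 1 x ≤ x := min_le_right _ _
      _ = x ^ (1:ℝ) := (Real.rpow_one x).symm
      _ ≤ x ^ ε := Real.rpow_le_rpow_of_exponent_ge h0x h.le h1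

lemma abs_exp_I_sub_aux (a b : ℝ) :
    ‖Complex.exp (Complex.I * a) - Complex.exp (Complex.I * b)‖ ≤
      2 * min 1 |a - b| := by
  have key : Complex.exp (Complex.I * a) - Complex.exp (Complex.I * b)
      = Complex.exp (Complex.I * b) * (Complex.exp (Complex.I * (a - b)) - 1) := by
    rw [mul_sub, mul_one, ← Complex.exp_add]
    ring_nf
  rw [key, norm_mul]
  have hb : ‖Complex.exp (Complex.I * b)‖ = 1 := by
    simp [Complex.norm_exp]
  rw [hb, one_mul]
  have habs : ‖Complex.I * (a - b)‖ = |a - b| := by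
    rw [← Complex.ofReal_sub, norm_mul, Complex.norm_I, one_mul, Complex.norm_real, Real.norm_eq_abs]
  rcases le_or_gt |a - b| 1 with h | h
  · have h2 := Complex.norm_exp_sub_one_le (x := Complex.I * ((a : ℂ) - b)) (by rw [habs]; exact h)
    rw [habs] at h2
    calc ‖Complex.exp (Complex.I * ((a:ℂ) - b)) - 1‖ ≤ 2 * |a - b| := h2
    _ = 2 * min 1 |a-b| := by rw [min_eq_right h]
  · have : ‖Complex.exp (Complex.I * ((a:ℂ) - b)) - 1‖ ≤
        ‖Complex.exp (Complex.I * ((a:ℂ) - b))‖ + 1 := by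
      simpa using norm_sub_le (Complex.exp (Complex.I * ((a:ℂ) - b))) 1
    have he : ‖Complex.exp (Complex.I * ((a:ℂ) - b))‖ = 1 := by
      simp [Complex.norm_exp]
    rw [min_eq_left h.le]
    linarith [this, he.le]

theorem stmt1 :
    ∃ C : ℝ, 0 < C ∧ ∀ s t ξ r ε : ℝ, 0 ≤ s → s ≤ t → t ≤ 1 → 0 < r → 0 ≤ ε → ε ≤ 1 →
      ‖gammaH t ξ r - gammaH s ξ r‖ ≤
        C * (|ξ| ^ ε * |t - s| ^ ε + |t - s|) := by
  refine ⟨2, by norm_num, fun s t ξ r ε hs hst ht1 hr hε0 hε1 => ?_⟩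
  set f : ℝ → ℂ := fun u => Complex.exp (-(u:ℂ) * (r:ℂ)^2) * Complex.exp (-Complex.I * ξ * u) with hf
  have hcont : Continuous f := by fun_prop
  have hint : ∀ a b : ℝ, IntervalIntegrable f volume a b :=
    fun a b => hcont.intervalIntegrable a b
  have hbound : ∀ u : ℝ, 0 ≤ u → ‖f u‖ ≤ 1 := by
    intro u hu
    rw [hf]
    simp only [norm_mul, Complex.norm_exp]
    have h1 : (-(u:ℂ) * (r:ℂ)^2).re = -(u * r^2) := by
      have : -(u:ℂ) * (r:ℂ)^2 = ((-(u * r^2) : ℝ) : ℂ) := by push_cast; ring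
      rw [this, Complex.ofReal_re]
    have h2 : (-Complex.I * (ξ:ℂ) * (u:ℂ)).re = 0 := by simp
    rw [h1, h2, Real.exp_zero, mul_one]
    exact Real.exp_le_one_iff.mpr (by nlinarith [sq_nonneg r])
  set It : ℂ := ∫ u in (0:ℝ)..t, f u with hIt
  set Is : ℂ := ∫ u in (0:ℝ)..s, f u with hIs
  have hsub : It - Is = ∫ u in s..t, f u := by
    rw [hIt, hIs]
    exact intervalIntegral.integral_interval_sub_left (hint 0 t) (hint 0 s)
  have habs_sub : ‖It - Is‖ ≤ |t - s| := by
    rw [hsub]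
    have := intervalIntegral.norm_integral_le_of_norm_le_const
      (C := 1) (f := f) (a := s) (b := t) (fun x hx => by
        apply hbound
        rcases Set.mem_uIoc.mp hx with h | h
        · linarith [h.1]
        · linarith [h.1])
    simpa using this
  have habs_Is : ‖Is‖ ≤ 1 := by
    have := intervalIntegral.norm_integral_le_of_norm_le_const
      (C := 1) (f := f) (a := 0) (b := s) (fun x hx => by
        apply hbound
        rcases Set.mem_uIoc.mp hx with h | h
        · linarith [h.1]
        · linarith [h.1, h.2])
    rw [hIs]
    calc ‖∫ u in (0:ℝ)..s, f u‖ ≤ 1 * |s - 0| := by simpa using this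
    _ ≤ 1 := by rw [one_mul, sub_zero, abs_of_nonneg hs]; linarith
  have hdecomp : gammaH t ξ r - gammaH s ξ r =
      Complex.exp (Complex.I * ξ * t) * (It - Is) +
      (Complex.exp (Complex.I * ξ * t) - Complex.exp (Complex.I * ξ * s)) * Is := by
    simp only [gammaH, hIt, hIs, hf]
    ring
  have het : ‖Complex.exp (Complex.I * ξ * t)‖ = 1 := by
    simp [Complex.norm_exp]
  have hed : ‖Complex.exp (Complex.I * ξ * t) - Complex.exp (Complex.I * ξ * s)‖ ≤
      2 * (|ξ| ^ ε * |t - s| ^ ε) := by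
    have h1 : (Complex.I * (ξ:ℂ) * (t:ℂ)) = Complex.I * ((ξ * t : ℝ) : ℂ) := by
      push_cast; ring
    have h2 : (Complex.I * (ξ:ℂ) * (s:ℂ)) = Complex.I * ((ξ * s : ℝ) : ℂ) := by
      push_cast; ring
    rw [h1, h2]
    have h3 := abs_exp_I_sub_aux (ξ * t) (ξ * s)
    have h4 : |ξ * t - ξ * s| = |ξ| * |t - s| := by
      rw [← abs_mul]; ring_nf
    rw [h4] at h3
    have h5 : min 1 (|ξ| * |t - s|) ≤ (|ξ| * |t - s|) ^ ε :=
      min_le_rpow_aux _ ε (by positivity) hε0 hε1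
    have h6 : (|ξ| * |t - s|) ^ ε = |ξ| ^ ε * |t - s| ^ ε :=
      Real.mul_rpow (abs_nonneg _) (abs_nonneg _)
    calc ‖Complex.exp (Complex.I * ((ξ*t : ℝ):ℂ)) - Complex.exp (Complex.I * ((ξ*s : ℝ):ℂ))‖
        ≤ 2 * min 1 (|ξ| * |t - s|) := h3
    _ ≤ 2 * (|ξ| ^ ε * |t - s| ^ ε) := by rw [← h6]; linarith
  calc ‖gammaH t ξ r - gammaH s ξ r‖
      ≤ ‖Complex.exp (Complex.I * ξ * t) * (It - Is)‖ +
        ‖(Complex.exp (Complex.I * ξ * t) - Complex.exp (Complex.I * ξ * s)) * Is‖ := by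
        rw [hdecomp]; exact norm_add_le _ _
    _ = ‖It - Is‖ +
        ‖Complex.exp (Complex.I * ξ * t) - Complex.exp (Complex.I * ξ * s)‖ *
          ‖Is‖ := by rw [norm_mul, norm_mul, het, one_mul]
    _ ≤ |t - s| + 2 * (|ξ| ^ ε * |t - s| ^ ε) * 1 := by gcongr
    _ ≤ 2 * (|ξ| ^ ε * |t - s| ^ ε + |t - s|) := by nlinarith [abs_nonneg (t - s)]
end

section
/- For all 0 ≤ s ≤ t ≤ 1, ξ ∈ ℝ with ξ ≠ 0, r > 0 and ε ∈ [0,1], one has |γ_{s,t}(ξ,r)| ≤ C (|t−s| r² / |ξ| + |t−s|^ε (1 + r²) / |ξ|^{1−ε}) for a universal constant C. -/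
open MeasureTheory

lemma cexp_lipschitz (x y : ℝ) :
    ‖Complex.exp ((x:ℂ) * Complex.I) - Complex.exp ((y:ℂ) * Complex.I)‖ ≤ |x - y| := by
  have hd : ∀ θ : ℝ, HasDerivAt (fun θ : ℝ => Complex.exp ((θ:ℂ) * Complex.I))
      (Complex.exp ((θ:ℂ) * Complex.I) * Complex.I) θ := by
    intro θ
    have h1 : HasDerivAt (fun θ : ℝ => (θ:ℂ) * Complex.I) Complex.I θ := by
      simpa using ((hasDerivAt_id (θ:ℂ)).mul_const Complex.I).comp_ofReal
    simpa using h1.cexp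
  have := convex_univ.norm_image_sub_le_of_norm_hasDerivWithin_le
    (f := fun θ : ℝ => Complex.exp ((θ:ℂ) * Complex.I))
    (f' := fun θ : ℝ => Complex.exp ((θ:ℂ) * Complex.I) * Complex.I)
    (fun θ _ => (hd θ).hasDerivWithinAt)
    (C := 1) (fun θ _ => by
      simp [Complex.norm_exp]) (Set.mem_univ y) (Set.mem_univ x)
  simpa [Real.norm_eq_abs] using this

lemma gammaH_formula (t ξ r : ℝ) (hξ : ξ ≠ 0) :
    gammaH t ξ r = (Complex.exp (Complex.I * ξ * t) - Complex.exp (-(t:ℂ) * (r:ℂ)^2)) /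
      ((r:ℂ)^2 + Complex.I * ξ) := by
  set z : ℂ := (r:ℂ)^2 + Complex.I * ξ with hz
  have him : z.im = ξ := by simp [hz, ← Complex.ofReal_pow]
  have hzne : z ≠ 0 := by
    intro h
    apply hξ
    rw [← him, h, Complex.zero_im]
  have hint : (∫ s in (0:ℝ)..t, Complex.exp (-(s:ℂ) * (r:ℂ)^2) * Complex.exp (-Complex.I * ξ * s))
      = (Complex.exp ((-z) * t) - 1) / (-z) := by
    have : ∀ s : ℝ, Complex.exp (-(s:ℂ) * (r:ℂ)^2) * Complex.exp (-Complex.I * ξ * s)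
        = Complex.exp ((-z) * s) := by
      intro s
      rw [← Complex.exp_add]
      congr 1
      simp only [hz]
      ring
    rw [intervalIntegral.integral_congr (fun s _ => this s),
      integral_exp_mul_complex (neg_ne_zero.mpr hzne)]
    simp
  rw [gammaH, hint]
  have hexp : Complex.exp (Complex.I * ξ * t) * Complex.exp ((-z) * t)
      = Complex.exp (-(t:ℂ) * (r:ℂ)^2) := by
    rw [← Complex.exp_add]
    congr 1
    simp only [hz]
    ring
  have hstep : (Complex.exp ((-z) * t) - 1) / (-z) = (1 - Complex.exp ((-z) * t)) / z := by
    rw [show Complex.exp ((-z) * t) - 1 = -(1 - Complex.exp ((-z) * t)) by ring, neg_div_neg_eq]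
  rw [hstep, mul_div_assoc']
  congr 1
  rw [mul_sub, mul_one, hexp]

theorem stmt2 :
    ∃ C : ℝ, 0 < C ∧ ∀ s t ξ r ε : ℝ, 0 ≤ s → s ≤ t → t ≤ 1 → ξ ≠ 0 → 0 < r → 0 ≤ ε → ε ≤ 1 →
      ‖gammaH t ξ r - gammaH s ξ r‖ ≤
        C * (|t - s| * r^2 / |ξ| + |t - s| ^ ε * (1 + r^2) / |ξ| ^ (1 - ε)) := by
  refine ⟨2, by norm_num, fun s t ξ r ε hs hst ht1 hξ hr hε hε1 => ?_⟩
  set z : ℂ := (r:ℂ)^2 + Complex.I * ξ with hz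
  have hξpos : 0 < |ξ| := abs_pos.mpr hξ
  have hzabs : |ξ| ≤ ‖z‖ := by
    have h1 : |z.im| ≤ ‖z‖ := Complex.abs_im_le_norm z
    have h2 : z.im = ξ := by simp [hz, ← Complex.ofReal_pow]
    rwa [h2] at h1
  have hts : 0 ≤ t - s := sub_nonneg.mpr hst
  -- difference formula
  rw [gammaH_formula t ξ r hξ, gammaH_formula s ξ r hξ, div_sub_div_same, norm_div]
  set E1 : ℂ := Complex.exp (Complex.I * ξ * t) - Complex.exp (Complex.I * ξ * s)
  set E2 : ℂ := Complex.exp (-(t:ℂ) * (r:ℂ)^2) - Complex.exp (-(s:ℂ) * (r:ℂ)^2)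
  have hnum : Complex.exp (Complex.I * ξ * t) - Complex.exp (-(t:ℂ) * (r:ℂ)^2) -
      (Complex.exp (Complex.I * ξ * s) - Complex.exp (-(s:ℂ) * (r:ℂ)^2)) = E1 - E2 := by
    simp only [E1, E2]; ring
  rw [hnum]
  -- bound E1
  have hE1 : ‖E1‖ ≤ 2 * |ξ| ^ ε * |t - s| ^ ε := by
    have hlip : ‖E1‖ ≤ |ξ * t - ξ * s| := by
      have := cexp_lipschitz (ξ * t) (ξ * s)
      simpa only [E1, Complex.ofReal_mul, mul_comm Complex.I, mul_assoc] using this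
    have htriv : ‖E1‖ ≤ 2 := by
      calc ‖E1‖ ≤ ‖Complex.exp (Complex.I * ξ * t)‖ +
            ‖Complex.exp (Complex.I * ξ * s)‖ := by
            simpa [E1] using norm_sub_le _ _
        _ ≤ 2 := by
            rw [Complex.norm_exp, Complex.norm_exp]
            norm_num [Complex.mul_re, Complex.I_re, Complex.I_im]
    set a : ℝ := |ξ| * |t - s| with ha
    have ha0 : 0 ≤ a := by positivity
    have hxts : |ξ * t - ξ * s| = a := by rw [ha, ← abs_mul]; ring_nf
    rw [hxts] at hlip
    have key : ‖E1‖ ≤ 2 ^ (1 - ε) * a ^ ε := by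
      rcases le_or_gt a 2 with hc | hc
      · rcases eq_or_lt_of_le ha0 with h0 | h0
        · calc ‖E1‖ ≤ a := hlip
            _ = 0 := h0.symm
            _ ≤ 2 ^ (1 - ε) * a ^ ε := by positivity
        · calc ‖E1‖ ≤ a := hlip
            _ = a ^ (1 - ε) * a ^ ε := by
                rw [← Real.rpow_add h0, show (1 - ε) + ε = 1 by ring, Real.rpow_one]
            _ ≤ 2 ^ (1 - ε) * a ^ ε :=
                mul_le_mul_of_nonneg_right
                  (Real.rpow_le_rpow ha0 hc (by linarith)) (Real.rpow_nonneg ha0 ε)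
      · calc ‖E1‖ ≤ 2 := htriv
          _ = 2 ^ (1 - ε) * 2 ^ ε := by
              rw [← Real.rpow_add (by norm_num : (0:ℝ) < 2), show (1 - ε) + ε = 1 by ring,
                Real.rpow_one]
          _ ≤ 2 ^ (1 - ε) * a ^ ε :=
              mul_le_mul_of_nonneg_left
                (Real.rpow_le_rpow (by norm_num) hc.le hε) (by positivity)
    calc ‖E1‖ ≤ 2 ^ (1 - ε) * a ^ ε := key
      _ ≤ 2 * a ^ ε := by
          apply mul_le_mul_of_nonneg_right _ (Real.rpow_nonneg ha0 ε)
          calc (2:ℝ) ^ (1 - ε) ≤ 2 ^ (1:ℝ) := by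
                apply Real.rpow_le_rpow_left_iff (by norm_num : (1:ℝ) < 2) |>.mpr
                linarith
            _ = 2 := by norm_num
      _ = 2 * |ξ| ^ ε * |t - s| ^ ε := by
          rw [ha, Real.mul_rpow (abs_nonneg _) (abs_nonneg _)]; ring
  -- bound E2
  have hE2 : ‖E2‖ ≤ |t - s| * r ^ 2 := by
    have hcast : ∀ u : ℝ, Complex.exp (-(u:ℂ) * (r:ℂ)^2) = ((Real.exp (-(u * r^2)) : ℝ) : ℂ) := by
      intro u; rw [Complex.ofReal_exp]; push_cast; ring_nf
    rw [show E2 = ((Real.exp (-(t * r^2)) - Real.exp (-(s * r^2)) : ℝ) : ℂ) by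
      simp only [E2, hcast]; push_cast; ring]
    rw [Complex.norm_real, Real.norm_eq_abs]
    have h1 : Real.exp (-(t * r^2)) ≤ Real.exp (-(s * r^2)) := by
      apply Real.exp_le_exp.mpr; nlinarith [sq_nonneg r]
    rw [abs_of_nonpos (by linarith), neg_sub]
    have h2 : Real.exp (-(s * r^2)) - Real.exp (-(t * r^2))
        = Real.exp (-(s * r^2)) * (1 - Real.exp (-((t - s) * r^2))) := by
      rw [mul_sub, mul_one, ← Real.exp_add]; ring_nf
    rw [h2]
    have h3 : Real.exp (-(s * r^2)) ≤ 1 := by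
      apply Real.exp_le_one_iff.mpr; nlinarith [sq_nonneg r]
    have h4 : 1 - Real.exp (-((t - s) * r^2)) ≤ (t - s) * r^2 := by
      have := Real.add_one_le_exp (-((t - s) * r^2))
      nlinarith [Real.exp_pos (-((t - s) * r^2))]
    have h5 : 0 ≤ 1 - Real.exp (-((t - s) * r^2)) := by
      have : Real.exp (-((t - s) * r^2)) ≤ 1 := by
        apply Real.exp_le_one_iff.mpr; nlinarith [sq_nonneg r]
      linarith
    calc Real.exp (-(s * r^2)) * (1 - Real.exp (-((t - s) * r^2)))
        ≤ 1 * ((t - s) * r^2) := by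
          apply mul_le_mul h3 h4 h5 zero_le_one
      _ = |t - s| * r^2 := by rw [abs_of_nonneg hts]; ring
  -- combine
  have hdiv : ‖E1 - E2‖ / ‖z‖ ≤ (‖E1‖ + ‖E2‖) / |ξ| := by
    apply div_le_div₀ (by positivity) _ hξpos hzabs
    simpa using norm_sub_le E1 E2
  refine le_trans hdiv ?_
  have hsum : (‖E1‖ + ‖E2‖) / |ξ|
      ≤ (2 * |ξ| ^ ε * |t - s| ^ ε + |t - s| * r ^ 2) / |ξ| := by
    gcongr
  refine le_trans hsum ?_
  have hkey : 2 * |ξ| ^ ε * |t - s| ^ ε / |ξ| = 2 * |t - s| ^ ε / |ξ| ^ (1 - ε) := by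
    rw [Real.rpow_sub hξpos, Real.rpow_one, div_div_eq_mul_div]
    ring
  rw [add_div, hkey]
  have hB : 2 * |t - s| ^ ε / |ξ| ^ (1 - ε) ≤ 2 * (|t - s| ^ ε * (1 + r ^ 2) / |ξ| ^ (1 - ε)) := by
    have hx : 0 ≤ |t - s| ^ ε := Real.rpow_nonneg (abs_nonneg _) _
    have hd : 0 < |ξ| ^ (1 - ε) := Real.rpow_pos_of_pos hξpos _
    rw [mul_div_assoc]
    apply mul_le_mul_of_nonneg_left _ (by norm_num)
    apply (div_le_div_iff_of_pos_right hd).mpr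
    nlinarith [sq_nonneg r]
  have hA : |t - s| * r ^ 2 / |ξ| ≤ 2 * (|t - s| * r ^ 2 / |ξ|) := by
    nlinarith [div_nonneg (mul_nonneg (abs_nonneg (t-s)) (sq_nonneg r)) hξpos.le]
  calc 2 * |t - s| ^ ε / |ξ| ^ (1 - ε) + |t - s| * r ^ 2 / |ξ|
      ≤ 2 * (|t - s| ^ ε * (1 + r ^ 2) / |ξ| ^ (1 - ε)) + 2 * (|t - s| * r ^ 2 / |ξ|) :=
        add_le_add hB hA
    _ = 2 * (|t - s| * r ^ 2 / |ξ| + |t - s| ^ ε * (1 + r ^ 2) / |ξ| ^ (1 - ε)) := by ring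
end

section
/- For all 0 ≤ s ≤ t ≤ 1, ξ ∈ ℝ, r > 0 and ε ∈ [0,1], one has |γ_{s,t}(ξ,r)| ≤ C |t−s|^ε (r^{2ε} + |ξ|^ε) / √(r⁴ + ξ²) for a universal constant C. -/
open MeasureTheory

lemma aux_min (x ε : ℝ) (hx : 0 ≤ x) (hε0 : 0 ≤ ε) (hε1 : ε ≤ 1) : min 1 x ≤ x ^ ε := by
  rcases le_or_gt x 1 with h | h
  · rw [min_eq_right h]
    rcases eq_or_lt_of_le hx with h0 | h0
    · rw [← h0]; positivity
    · calc x = x ^ (1:ℝ) := (Real.rpow_one x).symm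
        _ ≤ x ^ ε := Real.rpow_le_rpow_of_exponent_ge h0 h hε1
  · exact le_trans (min_le_left _ _) (Real.one_le_rpow h.le hε0)

lemma gammaH_eq (t ξ r : ℝ) (hr : 0 < r) :
    gammaH t ξ r = (Complex.exp (Complex.I*ξ*t) - Complex.exp (-(t:ℂ)*(r:ℂ)^2)) /
      ((r:ℂ)^2 + Complex.I*ξ) := by
  have hne : ((r:ℂ)^2 + Complex.I*ξ) ≠ 0 := by
    intro h
    have := congrArg Complex.re h
    simp [← Complex.ofReal_pow, Complex.add_re, Complex.mul_re] at this
    nlinarith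
  have hc : (-(((r:ℂ)^2) + Complex.I*ξ)) ≠ 0 := neg_ne_zero.mpr hne
  have hint : ∀ s : ℝ, Complex.exp (-(s:ℂ) * (r:ℂ)^2) * Complex.exp (-Complex.I * ξ * s)
      = Complex.exp ((-(((r:ℂ)^2) + Complex.I*ξ)) * s) := by
    intro s; rw [← Complex.exp_add]; ring_nf
  unfold gammaH
  rw [intervalIntegral.integral_congr (fun s _ => hint s), integral_exp_mul_complex hc]
  have hexp : Complex.exp (Complex.I*ξ*t) * Complex.exp ((-(((r:ℂ)^2)+Complex.I*ξ))*t)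
      = Complex.exp (-(t:ℂ)*(r:ℂ)^2) := by
    rw [← Complex.exp_add]; congr 1; ring
  simp only [Complex.ofReal_zero, mul_zero, Complex.exp_zero]
  rw [mul_div_assoc' _ _ _, div_eq_div_iff hc hne]
  linear_combination (((r:ℂ)^2 + Complex.I*ξ)) * hexp

lemma abs_exp_I_sub_one (d : ℝ) :
    ‖Complex.exp (Complex.I*d) - 1‖ ≤ min 2 |d| := by
  refine le_min ?_ ?_
  · calc ‖Complex.exp (Complex.I*d) - 1‖
        ≤ ‖Complex.exp (Complex.I*d)‖ + ‖(1:ℂ)‖ := by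
          rw [sub_eq_add_neg]
          refine (norm_add_le _ _).trans ?_
          rw [norm_neg]
      _ = 2 := by
          rw [Complex.norm_exp]
          simp
          norm_num
  · have h1 : Complex.I*(d:ℂ) = (d:ℂ)*Complex.I := by ring
    rw [h1, Complex.exp_mul_I, ← Complex.ofReal_cos, ← Complex.ofReal_sin]
    have habs : ‖(Real.cos d : ℂ) + (Real.sin d : ℂ) * Complex.I - 1‖
        = Real.sqrt ((Real.cos d - 1)^2 + (Real.sin d)^2) := by
      rw [Complex.norm_def, Complex.normSq_apply]
      congr 1
      simp [Complex.add_re, Complex.add_im, Complex.mul_re, Complex.mul_im,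
        Complex.cos_ofReal_re, Complex.sin_ofReal_re]
      ring
    rw [habs]
    have hsin : (Real.sin (d/2))^2 ≤ (d/2)^2 := by
      have := Real.abs_sin_le_abs (x := d/2)
      calc (Real.sin (d/2))^2 = |Real.sin (d/2)|^2 := (sq_abs _).symm
        _ ≤ |d/2|^2 := by gcongr
        _ = (d/2)^2 := sq_abs _
    have hcos : Real.cos (d/2)^2 = 1/2 + Real.cos d / 2 := by
      rw [Real.cos_sq, show 2*(d/2) = d by ring]
    have hpyth := Real.sin_sq_add_cos_sq (d/2)
    have hle : (Real.cos d - 1)^2 + (Real.sin d)^2 ≤ d^2 := by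
      have hp := Real.sin_sq_add_cos_sq d
      nlinarith [Real.neg_one_le_cos d, Real.cos_le_one d]
    calc Real.sqrt ((Real.cos d - 1)^2 + (Real.sin d)^2) ≤ Real.sqrt (d^2) :=
          Real.sqrt_le_sqrt hle
      _ = |d| := Real.sqrt_sq_eq_abs d

lemma exp_diff_le (a b : ℝ) (ha : 0 ≤ a) (hab : a ≤ b) :
    |Real.exp (-b) - Real.exp (-a)| ≤ min 1 (b - a) := by
  have e1 : 1 - (b - a) ≤ Real.exp (-(b-a)) := by
    linarith [Real.add_one_le_exp (-(b-a))]
  have e2 : Real.exp (-b) = Real.exp (-a) * Real.exp (-(b-a)) := by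
    rw [← Real.exp_add]; ring_nf
  have e3 : Real.exp (-a) ≤ 1 := Real.exp_le_one_iff.mpr (by linarith)
  have e4 : Real.exp (-b) ≤ Real.exp (-a) := Real.exp_le_exp.mpr (by linarith)
  have e5 : 0 < Real.exp (-b) := Real.exp_pos _
  rw [abs_of_nonpos (by linarith)]
  refine le_min (by linarith) ?_
  nlinarith [Real.exp_pos (-(b-a)), Real.exp_pos (-a)]

set_option maxHeartbeats 1000000 in
theorem stmt3 :
    ∃ C : ℝ, 0 < C ∧ ∀ s t ξ r ε : ℝ, 0 ≤ s → s ≤ t → t ≤ 1 → 0 < r → 0 ≤ ε → ε ≤ 1 →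
      ‖gammaH t ξ r - gammaH s ξ r‖ ≤
        C * (|t - s| ^ ε * (r ^ (2*ε) + |ξ| ^ ε) / Real.sqrt (r^4 + ξ^2)) := by
  refine ⟨2, by norm_num, fun s t ξ r ε hs hst ht1 hr hε0 hε1 => ?_⟩
  set d : ℝ := t - s with hd
  have hd0 : 0 ≤ d := by linarith
  have hsq : (0:ℝ) < r^4 + ξ^2 := by positivity
  have hsqrt : 0 < Real.sqrt (r^4 + ξ^2) := Real.sqrt_pos.mpr hsq
  -- denominator
  have hdenom : ‖(r:ℂ)^2 + Complex.I*ξ‖ = Real.sqrt (r^4 + ξ^2) := by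
    rw [Complex.norm_def, Complex.normSq_apply]
    congr 1
    simp [← Complex.ofReal_pow, Complex.add_re, Complex.add_im, Complex.mul_re, Complex.mul_im]
    ring
  have hform : gammaH t ξ r - gammaH s ξ r =
      ((Complex.exp (Complex.I*ξ*t) - Complex.exp (Complex.I*ξ*s)) -
       (Complex.exp (-(t:ℂ)*(r:ℂ)^2) - Complex.exp (-(s:ℂ)*(r:ℂ)^2))) /
      ((r:ℂ)^2 + Complex.I*ξ) := by
    rw [gammaH_eq t ξ r hr, gammaH_eq s ξ r hr]
    rw [div_sub_div_same]
    congr 1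
    ring
  rw [hform, norm_div, hdenom]
  -- oscillatory part
  have h1 : ‖Complex.exp (Complex.I*ξ*t) - Complex.exp (Complex.I*ξ*s)‖
      ≤ min 2 (|ξ| * d) := by
    have hfac : Complex.exp (Complex.I*ξ*t) - Complex.exp (Complex.I*ξ*s)
        = Complex.exp (Complex.I*ξ*s) * (Complex.exp (Complex.I*(ξ*d : ℝ)) - 1) := by
      have harg : Complex.I*(ξ:ℂ)*(t:ℂ) = Complex.I*(ξ:ℂ)*(s:ℂ) + Complex.I*((ξ*d : ℝ):ℂ) := by
        rw [hd]; push_cast; ring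
      rw [mul_sub, ← Complex.exp_add, mul_one, ← harg]
    rw [hfac, norm_mul]
    have habs1 : ‖Complex.exp (Complex.I*ξ*s)‖ = 1 := by
      rw [Complex.norm_exp]
      simp [Complex.mul_re, Complex.mul_im]
    rw [habs1, one_mul]
    have := abs_exp_I_sub_one (ξ*d)
    have heq : |ξ*d| = |ξ| * d := by rw [abs_mul, abs_of_nonneg hd0]
    rwa [heq] at this
  -- real exponential part
  have h2 : ‖Complex.exp (-(t:ℂ)*(r:ℂ)^2) - Complex.exp (-(s:ℂ)*(r:ℂ)^2)‖
      ≤ min 1 (r^2 * d) := by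
    have hcast : ∀ u : ℝ, Complex.exp (-(u:ℂ)*(r:ℂ)^2) = ((Real.exp (-(u*r^2)) : ℝ) : ℂ) := by
      intro u
      rw [Complex.ofReal_exp]
      congr 1
      push_cast
      ring
    rw [hcast t, hcast s, ← Complex.ofReal_sub, Complex.norm_real]
    have := exp_diff_le (s*r^2) (t*r^2) (by positivity) (by nlinarith)
    have heq : t*r^2 - s*r^2 = r^2 * d := by ring
    rwa [heq] at this
  -- min bounds via rpow
  have hmin1 : min 2 (|ξ| * d) ≤ 2 * (|ξ| * d) ^ ε := by
    have h0 : (0:ℝ) ≤ |ξ| * d := by positivity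
    calc min 2 (|ξ| * d) ≤ 2 * min 1 (|ξ| * d) := by
          rcases le_or_gt (|ξ| * d) 1 with h | h
          · rw [min_eq_right h, min_eq_right (by linarith : |ξ| * d ≤ 2)]; linarith
          · rw [min_eq_left h.le]
            have := min_le_left 2 (|ξ| * d)
            linarith
      _ ≤ 2 * (|ξ| * d) ^ ε := by
          have := aux_min (|ξ| * d) ε h0 hε0 hε1; linarith
  have hmin2 : min 1 (r^2 * d) ≤ (r^2 * d) ^ ε :=
    aux_min (r^2*d) ε (by positivity) hε0 hε1
  have hr1 : (|ξ| * d) ^ ε = |ξ| ^ ε * d ^ ε := Real.mul_rpow (abs_nonneg _) hd0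
  have hr2 : (r^2 * d) ^ ε = r ^ (2*ε) * d ^ ε := by
    rw [Real.mul_rpow (by positivity) hd0]
    congr 1
    rw [← Real.rpow_natCast r 2, ← Real.rpow_mul hr.le]
    norm_num
  -- combine
  have hnum : ‖(Complex.exp (Complex.I*ξ*t) - Complex.exp (Complex.I*ξ*s)) -
       (Complex.exp (-(t:ℂ)*(r:ℂ)^2) - Complex.exp (-(s:ℂ)*(r:ℂ)^2))‖
      ≤ 2 * (d ^ ε * (r ^ (2*ε) + |ξ| ^ ε)) := by
    calc ‖_‖ ≤ ‖Complex.exp (Complex.I*ξ*t) - Complex.exp (Complex.I*ξ*s)‖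
          + ‖Complex.exp (-(t:ℂ)*(r:ℂ)^2) - Complex.exp (-(s:ℂ)*(r:ℂ)^2)‖ := by
          rw [sub_eq_add_neg]
          refine (norm_add_le _ _).trans ?_
          rw [norm_neg]
      _ ≤ min 2 (|ξ| * d) + min 1 (r^2 * d) := add_le_add h1 h2
      _ ≤ 2 * (|ξ| * d) ^ ε + (r^2 * d) ^ ε := add_le_add hmin1 hmin2
      _ = 2 * (|ξ| ^ ε * d ^ ε) + r ^ (2*ε) * d ^ ε := by rw [hr1, hr2]
      _ ≤ 2 * (d ^ ε * (r ^ (2*ε) + |ξ| ^ ε)) := by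
          have : (0:ℝ) ≤ r ^ (2*ε) * d ^ ε := by positivity
          nlinarith
  have habs : |t - s| = d := abs_of_nonneg hd0
  rw [habs]
  calc ‖_‖ / Real.sqrt (r^4+ξ^2)
      ≤ (2 * (d ^ ε * (r ^ (2*ε) + |ξ| ^ ε))) / Real.sqrt (r^4+ξ^2) := by gcongr
    _ = 2 * (d ^ ε * (r ^ (2*ε) + |ξ| ^ ε) / Real.sqrt (r^4+ξ^2)) := by ring
end
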